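/- Let p be a probability measure on ℝᵈ with p({z : ‖z‖ ≤ R_Z}) = 1 for some R_Z > 0, let μ : ℝᵈ → ℝⁿ be L-Lipschitz (L > 0), and for x ∈ ℝⁿ define f_x(z) = exp(−(1/2)·‖x − μ(z)‖²) and the posterior measure Q_x(B) = (∫_B f_x dp)/(∫ f_x dp). Let z₁, z₂ ∈ ℝᵈ with ‖z₁‖ ≤ R_Z, ‖z₂‖ ≤ R_Z, and set x₁ = μ(z₁), x₂ = μ(z₂). Then for every measurable B ⊆ ℝᵈ, Q_{x₁}(B) ≤ e^{8·L²·R_Z²}·Q_{x₂}(B). -/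

import Mathlib

open MeasureTheory
open scoped NNReal

/-- **ε-DP of the encoder of a Lipschitz-constrained VAE.**
Let the latent prior p be supported in the ball of radius R_Z, let the decoder
μ be L-Lipschitz, and define the Gaussian likelihood f_x(z) = exp(−½‖x − μ(z)‖²)
and the posterior Q_x(B) = (∫_B f_x dp)/(∫ f_x dp). For decoder reconstructions
x₁ = μ(z₁), x₂ = μ(z₂) of latent codes in the ball of radius R_Z, and every
measurable B, Q_{x₁}(B) ≤ e^{8L²R_Z²}·Q_{x₂}(B). -/
theorem lvae_encoder_dp {d n : ℕ}
    (p : Measure (EuclideanSpace ℝ (Fin d))) [IsProbabilityMeasure p]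
    (RZ : ℝ) (hRZ : 0 < RZ)
    (hsupp : p {z : EuclideanSpace ℝ (Fin d) | ‖z‖ ≤ RZ} = 1)
    (μ : EuclideanSpace ℝ (Fin d) → EuclideanSpace ℝ (Fin n))
    (L : ℝ≥0) (hL : 0 < L) (hLip : LipschitzWith L μ)
    (f : EuclideanSpace ℝ (Fin n) → EuclideanSpace ℝ (Fin d) → ℝ)
    (hf : ∀ x z, f x z = Real.exp (-(1 / 2 : ℝ) * ‖x - μ z‖ ^ 2))
    (z₁ z₂ : EuclideanSpace ℝ (Fin d)) (hz₁ : ‖z₁‖ ≤ RZ) (hz₂ : ‖z₂‖ ≤ RZ)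
    (x₁ x₂ : EuclideanSpace ℝ (Fin n)) (hx₁ : x₁ = μ z₁) (hx₂ : x₂ = μ z₂) :
    ∀ B : Set (EuclideanSpace ℝ (Fin d)), MeasurableSet B →
      (∫ z in B, f x₁ z ∂p) / (∫ z, f x₁ z ∂p) ≤
        Real.exp (8 * (L : ℝ) ^ 2 * RZ ^ 2) *
          ((∫ z in B, f x₂ z ∂p) / (∫ z, f x₂ z ∂p)) := by
  intro B hB
  set K : ℝ := 2 * (L : ℝ) ^ 2 * RZ ^ 2 with hKdef
  have hKnn : 0 ≤ K := by positivity
  -- a.e. in the ball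
  have hmeasS : MeasurableSet {z : EuclideanSpace ℝ (Fin d) | ‖z‖ ≤ RZ} := by
    have : {z : EuclideanSpace ℝ (Fin d) | ‖z‖ ≤ RZ} = Metric.closedBall 0 RZ := by
      ext z; simp [Metric.mem_closedBall, dist_zero_right]
    rw [this]; exact measurableSet_closedBall
  have hae : ∀ᵐ z ∂p, ‖z‖ ≤ RZ := by
    rw [ae_iff]
    have : {z : EuclideanSpace ℝ (Fin d) | ¬ ‖z‖ ≤ RZ} =
        {z : EuclideanSpace ℝ (Fin d) | ‖z‖ ≤ RZ}ᶜ := rfl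
    rw [this, measure_compl hmeasS (measure_ne_top _ _), hsupp, measure_univ, tsub_self]
  -- key quadratic bound
  have key : ∀ (x : EuclideanSpace ℝ (Fin n)) (zc : EuclideanSpace ℝ (Fin d)),
      ‖zc‖ ≤ RZ → x = μ zc → ∀ z : EuclideanSpace ℝ (Fin d), ‖z‖ ≤ RZ →
      (1 / 2 : ℝ) * ‖x - μ z‖ ^ 2 ≤ K := by
    intro x zc hzc hx z hz
    have h1 : ‖x - μ z‖ ≤ (L : ℝ) * (2 * RZ) := by
      rw [hx]
      have h2 : ‖μ zc - μ z‖ ≤ (L : ℝ) * ‖zc - z‖ := by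
        have := hLip.dist_le_mul zc z
        simpa [dist_eq_norm] using this
      have h3 : ‖zc - z‖ ≤ 2 * RZ := by
        calc ‖zc - z‖ ≤ ‖zc‖ + ‖z‖ := norm_sub_le _ _
          _ ≤ 2 * RZ := by linarith
      calc ‖μ zc - μ z‖ ≤ (L : ℝ) * ‖zc - z‖ := h2
        _ ≤ (L : ℝ) * (2 * RZ) := by
            exact mul_le_mul_of_nonneg_left h3 (L.coe_nonneg)
    have hnn : (0 : ℝ) ≤ ‖x - μ z‖ := norm_nonneg _
    have hsq : ‖x - μ z‖ ^ 2 ≤ ((L : ℝ) * (2 * RZ)) ^ 2 :=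
      pow_le_pow_left₀ hnn h1 2
    have : ((L : ℝ) * (2 * RZ)) ^ 2 = 4 * (L : ℝ) ^ 2 * RZ ^ 2 := by ring
    rw [hKdef]; nlinarith
  -- pointwise bounds a.e.
  have hfub : ∀ x z, f x z ≤ 1 := by
    intro x z; rw [hf]
    have : -(1 / 2 : ℝ) * ‖x - μ z‖ ^ 2 ≤ 0 := by nlinarith [sq_nonneg ‖x - μ z‖]
    simpa using Real.exp_le_one_iff.mpr this
  have hfpos : ∀ x z, 0 < f x z := by
    intro x z; rw [hf]; exact Real.exp_pos _
  have hflb : ∀ x zc, ‖zc‖ ≤ RZ → x = μ zc → ∀ z, ‖z‖ ≤ RZ →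
      Real.exp (-K) ≤ f x z := by
    intro x zc hzc hx z hz
    rw [hf]
    apply Real.exp_le_exp.mpr
    have := key x zc hzc hx z hz
    linarith
  -- comparison : f x₁ ≤ exp K * f x₂ pointwise on ball, and symmetrically
  have hcomp : ∀ (xa xb : EuclideanSpace ℝ (Fin n)) (zc : EuclideanSpace ℝ (Fin d)),
      ‖zc‖ ≤ RZ → xb = μ zc → ∀ z, ‖z‖ ≤ RZ →
      f xa z ≤ Real.exp K * f xb z := by
    intro xa xb zc hzc hxb z hz
    calc f xa z ≤ 1 := hfub xa z
      _ ≤ Real.exp K * f xb z := by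
          have h := hflb xb zc hzc hxb z hz
          calc (1 : ℝ) = Real.exp K * Real.exp (-K) := by
                rw [← Real.exp_add]; simp
            _ ≤ Real.exp K * f xb z :=
                mul_le_mul_of_nonneg_left h (Real.exp_pos K).le
  -- integrability
  have hcont : ∀ x, Continuous (f x) := by
    intro x
    have : Continuous fun z => Real.exp (-(1 / 2 : ℝ) * ‖x - μ z‖ ^ 2) := by
      apply Real.continuous_exp.comp
      exact (continuous_const.mul (((continuous_const.sub hLip.continuous).norm).pow 2))
    convert this using 1; ext z; rw [hf]
  have hint : ∀ x, Integrable (f x) p := by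
    intro x
    refine (integrable_const (1 : ℝ)).mono' ((hcont x).aestronglyMeasurable) ?_
    filter_upwards with z
    rw [Real.norm_eq_abs, abs_of_pos (hfpos x z)]
    exact hfub x z
  -- quantities
  set I₁ := ∫ z, f x₁ z ∂p with hI₁
  set I₂ := ∫ z, f x₂ z ∂p with hI₂
  set J₁ := ∫ z in B, f x₁ z ∂p with hJ₁
  set J₂ := ∫ z in B, f x₂ z ∂p with hJ₂
  have hI₁pos : 0 < I₁ := by
    have h := integral_mono_ae (integrable_const (Real.exp (-K))) (hint x₁)
      (hae.mono fun z hz => hflb x₁ z₁ hz₁ hx₁ z hz)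
    simp only [integral_const, probReal_univ, smul_eq_mul, one_mul] at h
    exact lt_of_lt_of_le (Real.exp_pos _) h
  have hI₂pos : 0 < I₂ := by
    have h := integral_mono_ae (integrable_const (Real.exp (-K))) (hint x₂)
      (hae.mono fun z hz => hflb x₂ z₂ hz₂ hx₂ z hz)
    simp only [integral_const, probReal_univ, smul_eq_mul, one_mul] at h
    exact lt_of_lt_of_le (Real.exp_pos _) h
  have hJ₂nn : 0 ≤ J₂ := setIntegral_nonneg hB fun z _ => (hfpos x₂ z).le
  -- J₁ ≤ exp K * J₂
  have hJ : J₁ ≤ Real.exp K * J₂ := by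
    have h : J₁ ≤ ∫ z in B, Real.exp K * f x₂ z ∂p := by
      apply integral_mono_ae ((hint x₁).restrict) (((hint x₂).restrict).const_mul _)
      exact ae_restrict_of_ae (hae.mono fun z hz => hcomp x₁ x₂ z₂ hz₂ hx₂ z hz)
    rwa [integral_const_mul] at h
  -- I₂ ≤ exp K * I₁
  have hI : I₂ ≤ Real.exp K * I₁ := by
    have h : I₂ ≤ ∫ z, Real.exp K * f x₁ z ∂p := by
      apply integral_mono_ae (hint x₂) ((hint x₁).const_mul _)
      exact hae.mono fun z hz => hcomp x₂ x₁ z₁ hz₁ hx₁ z hz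
    rwa [integral_const_mul] at h
  -- combine
  rw [mul_div_assoc', div_le_div_iff₀ hI₁pos hI₂pos]
  have h2K : Real.exp K * Real.exp K ≤ Real.exp (8 * (L : ℝ) ^ 2 * RZ ^ 2) := by
    rw [← Real.exp_add]
    apply Real.exp_le_exp.mpr
    rw [hKdef]; nlinarith [sq_nonneg ((L : ℝ) * RZ)]
  calc J₁ * I₂ ≤ (Real.exp K * J₂) * (Real.exp K * I₁) := by
        apply mul_le_mul hJ hI hI₂pos.le
        positivity
    _ = (Real.exp K * Real.exp K) * (J₂ * I₁) := by ring
    _ ≤ Real.exp (8 * (L : ℝ) ^ 2 * RZ ^ 2) * (J₂ * I₁) := by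
        apply mul_le_mul_of_nonneg_right h2K
        positivity
    _ = Real.exp (8 * (L : ℝ) ^ 2 * RZ ^ 2) * J₂ * I₁ := by ring
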